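/- Suppose x'(t) = f(x(t), c, θ) on [0, T] (T ≤ τ, constant delayed value c), with loss L = Σ_j (X_j − x(t_j))² and f C¹. Let p solve the extended adjoint equation p'(t) = −∂f/∂x(x(t), c, θ)·p(t) + 2 Σ_j (x(t_j) − X_j)·δ(t − t_j) interpreted as: p has jump discontinuities p(t_j⁻) = p(t_j⁺) + 2(x(t_j) − X_j) at each sample time and solves p' = −(∂f/∂x)p elsewhere, with p(T⁺) = 0. Then dL/dθ = ∫₀^T p(t)·(∂f/∂θ)(x(t), c, θ) dt. -/

import Mathlib

open Set
open Filter MeasureTheory intervalIntegral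

private lemma gb_le {K ε x X : ℝ} (hK : 0 ≤ K) (hε : 0 ≤ ε) (hx : 0 ≤ x) (hxX : x ≤ X) :
    gronwallBound 0 K ε x ≤ ε * X * Real.exp (K * X) := by
  have hX : 0 ≤ X := hx.trans hxX
  rcases eq_or_ne K 0 with hK0 | hK0
  · subst hK0
    rw [gronwallBound_K0]
    simp only [zero_mul, zero_add]
    rw [Real.exp_zero, mul_one]
    nlinarith
  · rw [gronwallBound_of_K_ne_0 hK0]
    have hKpos : 0 < K := lt_of_le_of_ne hK (Ne.symm hK0)
    have h1 : Real.exp (K * x) - 1 ≤ (K * x) * Real.exp (K * x) := by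
      have := Real.add_one_le_exp (-(K * x))
      have hepos : (0:ℝ) < Real.exp (K * x) := Real.exp_pos _
      have : (-(K*x) + 1) * Real.exp (K * x) ≤ Real.exp (-(K*x)) * Real.exp (K*x) := by
        nlinarith
      rw [← Real.exp_add] at this
      simp at this
      nlinarith
    have h2 : ε / K * (Real.exp (K * x) - 1) ≤ ε / K * ((K * x) * Real.exp (K * x)) := by
      apply mul_le_mul_of_nonneg_left h1 (by positivity)
    have h3 : ε / K * ((K * x) * Real.exp (K * x)) = ε * x * Real.exp (K * x) := by
      field_simp
    rw [h3] at h2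
    simp only [zero_mul, zero_add]
    refine h2.trans ?_
    have := Real.exp_le_exp.2 (mul_le_mul_of_nonneg_left hxX hK)
    have h4 : ε * x ≤ ε * X := mul_le_mul_of_nonneg_left hxX hε
    have h5 : (0:ℝ) ≤ ε * x := by positivity
    nlinarith [Real.exp_pos (K * x), Real.exp_pos (K * X)]

private lemma piece_integral (a b y p : ℝ → ℝ) (hb : Continuous b) (hycont : Continuous y)
    (hy : ∀ s, HasDerivAt y (a s * y s + b s) s)
    (u v Lv : ℝ) (huv : u < v)
    (hpu : ContinuousWithinAt p (Ici u) u)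
    (hpd : ∀ s ∈ Ioo u v, HasDerivAt p (-(a s) * p s) s)
    (hLv : Tendsto p (nhdsWithin v (Iio v)) (nhds Lv)) :
    IntervalIntegrable (fun s => p s * b s) volume u v ∧
      ∫ s in u..v, p s * b s = Lv * y v - p u * y u := by
  classical
  set P : ℝ → ℝ := fun s => if s = v then Lv else p s with hP
  have hPv : P v = Lv := by simp [hP]
  have hPeq : ∀ s, s ≠ v → P s = p s := fun s hs => by simp [hP, hs]
  have hPeq' : ∀ s ∈ Iio v, p s = P s := fun s hs => (hPeq s (ne_of_lt hs)).symm
  have hPcont : ContinuousOn P (Icc u v) := by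
    intro s hs
    rcases eq_or_lt_of_le hs.2 with hsv | hsv
    · subst hsv
      have h1 : Tendsto P (nhdsWithin s (Iio s)) (nhds (P s)) := by
        rw [hPv]
        exact hLv.congr' (eventually_nhdsWithin_of_forall hPeq')
      have h2 : Tendsto P (nhdsWithin s {s}) (nhds (P s)) := by
        rw [nhdsWithin_singleton]
        exact tendsto_pure_nhds P s
      have h3 : Tendsto P (nhdsWithin s (Iic s)) (nhds (P s)) := by
        rw [← Iio_union_right, nhdsWithin_union]
        exact Filter.tendsto_sup.2 ⟨h1, h2⟩
      exact h3.mono_left (nhdsWithin_mono s Icc_subset_Iic_self)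
    · have hmem : Iio v ∈ nhds s := Iio_mem_nhds hsv
      have heq : P =ᶠ[nhds s] p := by
        filter_upwards [hmem] with r hr
        exact hPeq r (ne_of_lt hr)
      have hpws : ContinuousWithinAt p (Icc u v) s := by
        rcases eq_or_lt_of_le hs.1 with hus | hus
        · subst hus
          exact hpu.mono Icc_subset_Ici_self
        · exact ((hpd s ⟨hus, hsv⟩).continuousAt).continuousWithinAt
      exact hpws.congr_of_eventuallyEq (heq.filter_mono nhdsWithin_le_nhds)
        (hPeq s (ne_of_lt hsv))
  set H : ℝ → ℝ := fun s => P s * y s with hH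
  have hHcont : ContinuousOn H (Icc u v) := hPcont.mul hycont.continuousOn
  have hHderiv : ∀ s ∈ Ioo u v, HasDerivWithinAt H (P s * b s) (Ioi s) s := by
    intro s hsuv
    have hpy : HasDerivAt (fun r => p r * y r) (p s * b s) s := by
      have := (hpd s hsuv).mul (hy s)
      exact this.congr_deriv (by ring)
    have heq : (fun r => p r * y r) =ᶠ[nhds s] H := by
      filter_upwards [Iio_mem_nhds hsuv.2] with r hr
      simp [hH, hPeq r (ne_of_lt hr)]
    have hH' := hpy.congr_of_eventuallyEq heq.symm
    rw [hPeq s (ne_of_lt hsuv.2)]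
    exact hH'.hasDerivWithinAt
  have hint : IntervalIntegrable (fun s => P s * b s) volume u v :=
    (hPcont.mul hb.continuousOn).intervalIntegrable_of_Icc huv.le
  have hftc : ∫ s in u..v, P s * b s = H v - H u :=
    integral_eq_sub_of_hasDeriv_right_of_le huv.le hHcont hHderiv hint
  have hnull : (volume.restrict (Set.uIoc u v)) {v} = 0 := by
    rw [Measure.restrict_apply (measurableSet_singleton v)]
    exact measure_mono_null Set.inter_subset_left Real.volume_singleton
  have hae : (fun s => P s * b s) =ᵐ[volume.restrict (Set.uIoc u v)] (fun s => p s * b s) := by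
    rw [Filter.EventuallyEq, MeasureTheory.ae_iff]
    apply measure_mono_null _ hnull
    intro s hs
    simp only [mem_setOf_eq] at hs
    simp only [mem_singleton_iff]
    by_contra hsv
    exact hs (by rw [hPeq s hsv])
  constructor
  · exact hint.congr_ae hae
  · have hae2 : ∀ᵐ s ∂(volume : Measure ℝ), s ∈ Set.uIoc u v → p s * b s = P s * b s := by
      rw [MeasureTheory.ae_iff]
      refine measure_mono_null (fun s hs => ?_) (Real.volume_singleton (a := v))
      simp only [mem_setOf_eq, not_forall] at hs
      simp only [mem_singleton_iff]
      by_contra hsv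
      exact hs.2 (by rw [hPeq s hsv])
    rw [show (∫ s in u..v, p s * b s) = ∫ s in u..v, P s * b s from
      integral_congr_ae hae2, hftc]
    simp only [hH, hPv, hPeq u (ne_of_lt huv)]

set_option maxHeartbeats 2000000 in
/-- Adjoint sensitivity method with jump discontinuities for the discrete least-squares loss
`L(θ) = Σ_j (X_j - x(t_j; θ))²` on the first method-of-steps interval: if the adjoint `p`
satisfies `p' = -(∂f/∂x) p` away from the sample times, is right-continuous, vanishes after
`T`, and has jumps `p(t_j⁻) = p(t_j⁺) + 2(x(t_j) - X_j)` at the sample times, then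
`dL/dθ = ∫₀^T p(t) (∂f/∂θ)(x(t), c, θ) dt`. -/
theorem adjoint_with_jumps_loss_gradient {N : ℕ}
    (f : ℝ → ℝ → ℝ → ℝ)
    (hf : ContDiff ℝ 1 (fun q : ℝ × ℝ × ℝ => f q.1 q.2.1 q.2.2))
    (c τ T x₀ θ₀ : ℝ) (hτ : 0 < τ) (hT : 0 < T) (hTτ : T ≤ τ)
    (x : ℝ → ℝ → ℝ)
    (hx0 : ∀ θ, x θ 0 = x₀)
    (hx : ∀ θ, ∀ s ∈ Icc (0:ℝ) T, HasDerivAt (x θ) (f (x θ s) c θ) s)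
    (t : Fin N → ℝ) (ht : StrictMono t) (htmem : ∀ j, t j ∈ Ioc (0:ℝ) T)
    (X : Fin N → ℝ)
    (p : ℝ → ℝ)
    (hpafter : ∀ s, T < s → p s = 0)
    (hpright : ∀ s ∈ Icc (0:ℝ) T, ContinuousWithinAt p (Ici s) s)
    (hpjump : ∀ j, Filter.Tendsto p (nhdsWithin (t j) (Iio (t j)))
      (nhds (p (t j) + 2 * (x θ₀ (t j) - X j))))
    (hpleft : ∀ s ∈ Ioc (0:ℝ) T, (∀ j, s ≠ t j) →
      Filter.Tendsto p (nhdsWithin s (Iio s)) (nhds (p s)))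
    (hp : ∀ s ∈ Ioo (0:ℝ) T, (∀ j, s ≠ t j) →
      HasDerivAt p (-(deriv (fun u => f u c θ₀) (x θ₀ s)) * p s) s) :
    HasDerivAt (fun θ => ∑ j, (X j - x θ (t j)) ^ 2)
      (∫ s in (0:ℝ)..T, p s * deriv (fun u => f (x θ₀ s) c u) θ₀) θ₀ := by
  classical
  -- ### Setup: the reduced vector field and its derivative
  set G : ℝ × ℝ → ℝ := fun q => f q.1 c q.2 with hGdef
  have hG : ContDiff ℝ 1 G := by
    have : (fun q : ℝ × ℝ => f q.1 c q.2) =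
        (fun q : ℝ × ℝ × ℝ => f q.1 q.2.1 q.2.2) ∘ (fun q : ℝ × ℝ => (q.1, c, q.2)) := rfl
    rw [hGdef, this]
    exact hf.comp (contDiff_fst.prodMk (contDiff_const.prodMk contDiff_snd))
  have hGdiff : Differentiable ℝ G := hG.differentiable one_ne_zero
  have hGfc : Continuous (fun q => fderiv ℝ G q) := hG.continuous_fderiv one_ne_zero
  have hder1 : ∀ u θ : ℝ, HasDerivAt (fun w => f w c θ) (fderiv ℝ G (u, θ) (1, 0)) u := by
    intro u θ
    have h1 : HasDerivAt (fun w : ℝ => (w, θ)) ((1:ℝ), (0:ℝ)) u :=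
      (hasDerivAt_id u).prodMk (hasDerivAt_const u θ)
    exact ((hGdiff (u, θ)).hasFDerivAt.comp_hasDerivAt u h1 :)
  have hder2 : ∀ u θ : ℝ, HasDerivAt (fun w => f u c w) (fderiv ℝ G (u, θ) (0, 1)) θ := by
    intro u θ
    have h1 : HasDerivAt (fun w : ℝ => (u, w)) ((0:ℝ), (1:ℝ)) θ :=
      (hasDerivAt_const θ u).prodMk (hasDerivAt_id θ)
    exact ((hGdiff (u, θ)).hasFDerivAt.comp_hasDerivAt θ h1 :)
  have hxca : ∀ θ, ∀ s ∈ Icc (0:ℝ) T, ContinuousAt (x θ) s :=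
    fun θ s hs => (hx θ s hs).continuousAt
  -- ### clamped trajectory and variational coefficients
  set σ : ℝ → ℝ := fun s => min (max s 0) T with hσdef
  have hσcont : Continuous σ := (continuous_id.max continuous_const).min continuous_const
  have hσmem : ∀ s, σ s ∈ Icc (0:ℝ) T := fun s =>
    ⟨le_min (le_max_right s 0) hT.le, min_le_right _ _⟩
  have hσid : ∀ s ∈ Icc (0:ℝ) T, σ s = s := fun s hs => by
    rw [hσdef]; simp only []; rw [max_eq_left hs.1, min_eq_left hs.2]
  set χ : ℝ → ℝ := fun s => x θ₀ (σ s) with hχdef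
  have hχcont : Continuous χ := by
    rw [continuous_iff_continuousAt]
    exact fun s => (hxca θ₀ (σ s) (hσmem s)).comp hσcont.continuousAt
  have hχid : ∀ s ∈ Icc (0:ℝ) T, χ s = x θ₀ s := fun s hs => by rw [hχdef]; simp [hσid s hs]
  set a : ℝ → ℝ := fun s => fderiv ℝ G (χ s, θ₀) (1, 0) with hadef
  set b : ℝ → ℝ := fun s => fderiv ℝ G (χ s, θ₀) (0, 1) with hbdef
  have hχθc : Continuous (fun s => ((χ s, θ₀) : ℝ × ℝ)) := hχcont.prodMk continuous_const
  have hac : Continuous a := (hGfc.comp hχθc).clm_apply continuous_const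
  have hbc : Continuous b := (hGfc.comp hχθc).clm_apply continuous_const
  -- ### variational solution y
  set Ea : ℝ → ℝ := fun s => ∫ r in (0:ℝ)..s, a r with hEa
  have hEad : ∀ s, HasDerivAt Ea (a s) s := fun s => (hac.integral_hasStrictDerivAt 0 s).hasDerivAt
  set y : ℝ → ℝ := fun s => Real.exp (Ea s) * ∫ r in (0:ℝ)..s, Real.exp (-(Ea r)) * b r with hydef
  have hy : ∀ s, HasDerivAt y (a s * y s + b s) s := by
    intro s
    have h1 : HasDerivAt (fun s => Real.exp (Ea s)) (Real.exp (Ea s) * a s) s := by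
      exact (hEad s).exp
    have hEacont : Continuous Ea := by
      rw [continuous_iff_continuousAt]; exact fun s => (hEad s).continuousAt
    have hcont2 : Continuous (fun r => Real.exp (-(Ea r)) * b r) :=
      ((hEacont.neg).rexp).mul hbc
    have h2 : HasDerivAt (fun w => ∫ r in (0:ℝ)..w, Real.exp (-(Ea r)) * b r)
        (Real.exp (-(Ea s)) * b s) s := (hcont2.integral_hasStrictDerivAt 0 s).hasDerivAt
    have h3 := h1.mul h2
    refine HasDerivAt.congr_deriv (f := y) h3 ?_
    symm
    rw [hydef]
    simp only []
    rw [Real.exp_neg]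
    field_simp
  have hy0 : y 0 = 0 := by rw [hydef]; simp
  have hycont : Continuous y := by
    rw [continuous_iff_continuousAt]; exact fun s => (hy s).continuousAt
  -- ### identification of the derivatives appearing in the statement
  have haeq : ∀ s ∈ Icc (0:ℝ) T, deriv (fun u => f u c θ₀) (x θ₀ s) = a s := by
    intro s hs
    rw [(hder1 (x θ₀ s) θ₀).deriv]
    show fderiv ℝ G (x θ₀ s, θ₀) (1, 0) = fderiv ℝ G (χ s, θ₀) (1, 0)
    rw [hχid s hs]
  have hbeq : ∀ s ∈ Icc (0:ℝ) T, deriv (fun u => f (x θ₀ s) c u) θ₀ = b s := by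
    intro s hs
    rw [(hder2 (x θ₀ s) θ₀).deriv]
    show fderiv ℝ G (x θ₀ s, θ₀) (0, 1) = fderiv ℝ G (χ s, θ₀) (0, 1)
    rw [hχid s hs]
  have hp' : ∀ s ∈ Ioo (0:ℝ) T, (∀ j, s ≠ t j) → HasDerivAt p (-(a s) * p s) s := by
    intro s hs hsj
    have := hp s hs hsj
    rwa [haeq s ⟨hs.1.le, hs.2.le⟩] at this
  -- ### compact tube and constants
  obtain ⟨C, hC⟩ : ∃ C, ∀ s ∈ Icc (0:ℝ) T, ‖x θ₀ s‖ ≤ C :=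
    isCompact_Icc.exists_bound_of_continuousOn
      (fun s hs => (hxca θ₀ s hs).continuousWithinAt)
  have hC0 : 0 ≤ C := le_trans (norm_nonneg _) (hC 0 ⟨le_rfl, hT.le⟩)
  set K₁ : Set (ℝ × ℝ) := Icc (-C-1) (C+1) ×ˢ Icc (θ₀-1) (θ₀+1) with hK₁def
  have hK₁cpt : IsCompact K₁ := isCompact_Icc.prod isCompact_Icc
  have hK₁cvx : Convex ℝ K₁ := (convex_Icc _ _).prod (convex_Icc _ _)
  obtain ⟨Cf, hCf⟩ : ∃ Cf, ∀ q ∈ K₁, ‖fderiv ℝ G q‖ ≤ Cf :=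
    hK₁cpt.exists_bound_of_continuousOn hGfc.continuousOn
  have hmemK₁ : ((x θ₀ 0, θ₀) : ℝ × ℝ) ∈ K₁ := by
    constructor
    · have := hC 0 ⟨le_rfl, hT.le⟩
      rw [Real.norm_eq_abs, abs_le] at this
      exact ⟨by linarith [this.1], by linarith [this.2]⟩
    · exact ⟨by linarith, by linarith⟩
  have hCf0 : 0 ≤ Cf := le_trans (norm_nonneg _) (hCf _ hmemK₁)
  have hGlip : ∀ q ∈ K₁, ∀ q' ∈ K₁, ‖G q - G q'‖ ≤ Cf * ‖q - q'‖ := by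
    intro q hq q' hq'
    exact hK₁cvx.norm_image_sub_le_of_norm_hasFDerivWithin_le
      (fun r hr => (hGdiff r).hasFDerivAt.hasFDerivWithinAt) (fun r hr => hCf r hr) hq' hq
  have htrajK : ∀ s ∈ Icc (0:ℝ) T, ∀ θ', |θ' - θ₀| ≤ 1 → ((x θ₀ s, θ') : ℝ × ℝ) ∈ K₁ := by
    intro s hs θ' hθ'
    have := hC s hs
    rw [Real.norm_eq_abs, abs_le] at this
    rw [abs_le] at hθ'
    exact ⟨⟨by linarith [this.1], by linarith [this.2]⟩,
      ⟨by linarith [hθ'.1], by linarith [hθ'.2]⟩⟩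
  set C₁ : ℝ := Cf * T * Real.exp (Cf * T) with hC₁def
  have hC₁0 : 0 ≤ C₁ := by positivity
  set δ₁ : ℝ := min 1 (1 / (2 * (C₁ + 1))) with hδ₁def
  have hδ₁pos : 0 < δ₁ := lt_min one_pos (by positivity)
  have hδ₁le1 : δ₁ ≤ 1 := min_le_left _ _
  have hC₁δ₁ : C₁ * δ₁ ≤ 1 / 2 := by
    have h1 : C₁ * δ₁ ≤ C₁ * (1 / (2 * (C₁ + 1))) :=
      mul_le_mul_of_nonneg_left (min_le_right _ _) hC₁0
    have h2 : C₁ * (1 / (2 * (C₁ + 1))) ≤ 1 / 2 := by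
      have hpos : (0:ℝ) < 2 * (C₁ + 1) := by positivity
      rw [mul_one_div, div_le_iff₀ hpos]
      linarith
    linarith
  -- ### Step A: a priori bound on the deviation of trajectories
  have StepA : ∀ θ, |θ - θ₀| ≤ δ₁ → ∀ s ∈ Icc (0:ℝ) T,
      |x θ s - x θ₀ s| ≤ C₁ * |θ - θ₀| := by
    intro θ hθ
    have hθ1 : |θ - θ₀| ≤ 1 := hθ.trans hδ₁le1
    set A : Set ℝ := {s | s ∈ Icc (0:ℝ) T ∧ ∀ r ∈ Icc (0:ℝ) s, |x θ r - x θ₀ r| ≤ 1} with hAdef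
    have h0A : (0:ℝ) ∈ A := by
      refine ⟨⟨le_rfl, hT.le⟩, fun r hr => ?_⟩
      have : r = 0 := le_antisymm hr.2 hr.1
      rw [this, hx0 θ, hx0 θ₀]
      simp
    have hbddA : BddAbove A := ⟨T, fun s hs => hs.1.2⟩
    set s' : ℝ := sSup A with hs'def
    have hs'0 : 0 ≤ s' := le_csSup hbddA h0A
    have hs'T : s' ≤ T := csSup_le ⟨0, h0A⟩ (fun s hs => hs.1.2)
    have hIco : ∀ r ∈ Ico (0:ℝ) s', |x θ r - x θ₀ r| ≤ 1 := by
      intro r hr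
      obtain ⟨s, hsA, hrs⟩ := exists_lt_of_lt_csSup ⟨0, h0A⟩ hr.2
      exact hsA.2 r ⟨hr.1, hrs.le⟩
    have htube : ∀ r ∈ Icc (0:ℝ) s', |x θ r - x θ₀ r| ≤ 1 := by
      intro r hr
      rcases eq_or_lt_of_le hr.2 with hrs | hrs
      · rcases eq_or_lt_of_le hr.1 with hr0 | hr0
        · rw [← hr0, hx0 θ, hx0 θ₀]; simp
        · have hcont : ContinuousAt (fun w => |x θ w - x θ₀ w|) r :=
            ((hxca θ r ⟨hr.1, hrs.le.trans hs'T⟩).sub (hxca θ₀ r ⟨hr.1, hrs.le.trans hs'T⟩)).abs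
          refine le_of_tendsto (f := fun w => |x θ w - x θ₀ w|) (x := nhdsWithin r (Iio r))
            (hcont.continuousWithinAt.tendsto) ?_
          filter_upwards [Ioo_mem_nhdsLT_of_mem (⟨hr0, le_rfl⟩ : r ∈ Ioc (0:ℝ) r)]
            with w hw
          exact hIco w ⟨hw.1.le, hrs ▸ hw.2⟩
      · exact hIco r ⟨hr.1, hrs⟩
    have hgron : ∀ r ∈ Icc (0:ℝ) s', dist (x θ r) (x θ₀ r) ≤
        gronwallBound 0 Cf.toNNReal (Cf * |θ - θ₀| + 0) (r - 0) := by
      apply dist_le_of_approx_trajectories_ODE_of_mem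
        (v := fun _ u => f u c θ₀) (s := fun _ => Icc (-C-1) (C+1))
      · intro r _
        apply LipschitzOnWith.of_dist_le_mul
        intro u hu u' hu'
        have h1 := hGlip (u, θ₀) ⟨hu, ⟨by linarith, by linarith⟩⟩ (u', θ₀)
          ⟨hu', ⟨by linarith, by linarith⟩⟩
        have h2 : ‖((u, θ₀) : ℝ × ℝ) - (u', θ₀)‖ = |u - u'| := by
          simp only [Prod.mk_sub_mk, sub_self, Prod.norm_def, Real.norm_eq_abs, abs_zero]
          exact max_eq_left (abs_nonneg _)
        rw [h2, hGdef] at h1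
        rw [Real.coe_toNNReal _ hCf0, Real.dist_eq, Real.dist_eq]
        simpa using h1
      · exact fun r hr => ((hxca θ r ⟨hr.1, hr.2.trans hs'T⟩).continuousWithinAt)
      · exact fun r hr => (hx θ r ⟨hr.1, hr.2.le.trans hs'T⟩).hasDerivWithinAt
      · intro r hr
        have hr' : r ∈ Icc (0:ℝ) T := ⟨hr.1, hr.2.le.trans hs'T⟩
        have hmem1 : ((x θ r, θ) : ℝ × ℝ) ∈ K₁ := by
          have h2 := htube r ⟨hr.1, hr.2.le⟩
          have h3 := hC r hr'
          rw [Real.norm_eq_abs, abs_le] at h3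
          rw [abs_le] at h2 hθ1
          exact ⟨⟨by linarith, by linarith⟩, ⟨by linarith, by linarith⟩⟩
        have hmem2 : ((x θ r, θ₀) : ℝ × ℝ) ∈ K₁ := ⟨hmem1.1, ⟨by linarith, by linarith⟩⟩
        have h1 := hGlip _ hmem1 _ hmem2
        have h2 : ‖((x θ r, θ) : ℝ × ℝ) - (x θ r, θ₀)‖ = |θ - θ₀| := by
          simp only [Prod.mk_sub_mk, sub_self, Prod.norm_def, Real.norm_eq_abs, abs_zero]
          exact max_eq_right (abs_nonneg _)
        rw [h2, hGdef] at h1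
        rw [Real.dist_eq]
        simpa using h1
      · intro r hr
        have h2 := htube r ⟨hr.1, hr.2.le⟩
        have h3 := hC r ⟨hr.1, hr.2.le.trans hs'T⟩
        rw [Real.norm_eq_abs, abs_le] at h3
        rw [abs_le] at h2
        exact ⟨by linarith, by linarith⟩
      · exact fun r hr => ((hxca θ₀ r ⟨hr.1, hr.2.trans hs'T⟩).continuousWithinAt)
      · exact fun r hr => (hx θ₀ r ⟨hr.1, hr.2.le.trans hs'T⟩).hasDerivWithinAt
      · intro r hr; simp
      · intro r hr
        have h3 := hC r ⟨hr.1, hr.2.le.trans hs'T⟩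
        rw [Real.norm_eq_abs, abs_le] at h3
        exact ⟨by linarith, by linarith⟩
      · rw [hx0 θ, hx0 θ₀]; simp
    have hgron' : ∀ r ∈ Icc (0:ℝ) s', |x θ r - x θ₀ r| ≤ C₁ * |θ - θ₀| := by
      intro r hr
      have h1 := hgron r hr
      rw [Real.dist_eq, Real.coe_toNNReal _ hCf0] at h1
      refine h1.trans ?_
      have h2 := gb_le (K := Cf) (ε := Cf * |θ - θ₀| + 0) (x := r - 0) (X := T)
        hCf0 (by positivity) (by linarith [hr.1]) (by linarith [hr.2, hs'T])
      refine h2.trans_eq ?_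
      rw [hC₁def]; ring
    have hhalf : ∀ r ∈ Icc (0:ℝ) s', |x θ r - x θ₀ r| ≤ 1 / 2 := by
      intro r hr
      refine (hgron' r hr).trans ?_
      calc C₁ * |θ - θ₀| ≤ C₁ * δ₁ := mul_le_mul_of_nonneg_left hθ hC₁0
        _ ≤ 1 / 2 := hC₁δ₁
    have hs'eqT : s' = T := by
      by_contra hne
      have hs'ltT : s' < T := lt_of_le_of_ne hs'T hne
      have hcont : ContinuousAt (fun r => |x θ r - x θ₀ r|) s' :=
        ((hxca θ s' ⟨hs'0, hs'T⟩).sub (hxca θ₀ s' ⟨hs'0, hs'T⟩)).abs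
      rw [Metric.continuousAt_iff] at hcont
      obtain ⟨η, hηpos, hη⟩ := hcont (1/2) (by norm_num)
      set s'' : ℝ := min (s' + η / 2) T with hs''def
      have hs''gt : s' < s'' := lt_min (by linarith) hs'ltT
      have hs''A : s'' ∈ A := by
        refine ⟨⟨by linarith, min_le_right _ _⟩, fun r hr => ?_⟩
        rcases le_or_gt r s' with hrle | hrgt
        · exact (hhalf r ⟨hr.1, hrle⟩).trans (by norm_num)
        · have hdist : dist r s' < η := by
            rw [Real.dist_eq, abs_of_pos (by linarith)]
            have : r ≤ s' + η / 2 := hr.2.trans (min_le_left _ _)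
            linarith
          have h1 := hη hdist
          rw [Real.dist_eq] at h1
          have h2 := hhalf s' ⟨hs'0, le_rfl⟩
          have h4 := (le_abs_self _).trans h1.le
          linarith
      exact absurd (le_csSup hbddA hs''A) (not_le.2 hs''gt)
    intro s hs
    exact hgron' s (by rw [hs'eqT]; exact hs)
  -- bound on the coefficient a
  have haB : ∀ s, |a s| ≤ Cf := by
    intro s
    have hm : ((χ s, θ₀) : ℝ × ℝ) ∈ K₁ := by
      rw [hχdef]
      simp only []
      exact htrajK (σ s) (hσmem s) θ₀ (by simp)
    have h1 : |a s| ≤ ‖fderiv ℝ G (χ s, θ₀)‖ * ‖((1:ℝ), (0:ℝ))‖ :=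
      (fderiv ℝ G (χ s, θ₀)).le_opNorm _
    have h2 : ‖((1:ℝ), (0:ℝ))‖ = 1 := by
      rw [Prod.norm_def]
      simp
    rw [h2, mul_one] at h1
    exact h1.trans (hCf _ hm)
  -- ### Step C: differentiability of the solution in the parameter
  have StepC : ∀ s₁ ∈ Icc (0:ℝ) T, HasDerivAt (fun θ => x θ s₁) (y s₁) θ₀ := by
    intro s₁ hs₁
    rw [hasDerivAt_iff_isLittleO, Asymptotics.isLittleO_iff]
    intro εc hεc
    set C₂ : ℝ := max C₁ 1 with hC₂def
    have hC₂1 : 1 ≤ C₂ := le_max_right _ _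
    have hC₂0 : 0 < C₂ := lt_of_lt_of_le one_pos hC₂1
    have hC₁C₂ : C₁ ≤ C₂ := le_max_left _ _
    set D : ℝ := C₂ * T * Real.exp (Cf * T) + 1 with hDdef
    have hD : 0 < D := by positivity
    set ε' : ℝ := εc / D with hε'def
    have hε' : 0 < ε' := by positivity
    have hUC := hK₁cpt.uniformContinuousOn_of_continuous hGfc.continuousOn
    rw [Metric.uniformContinuousOn_iff_le] at hUC
    obtain ⟨η, hηpos, hη⟩ := hUC ε' hε'
    have hball : Metric.closedBall θ₀ (min δ₁ (η / C₂)) ∈ nhds θ₀ :=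
      Metric.closedBall_mem_nhds θ₀ (lt_min hδ₁pos (by positivity))
    filter_upwards [hball] with θ hθmem
    rw [Metric.mem_closedBall, Real.dist_eq] at hθmem
    have hθδ₁ : |θ - θ₀| ≤ δ₁ := hθmem.trans (min_le_left _ _)
    have hθ1 : |θ - θ₀| ≤ 1 := hθδ₁.trans hδ₁le1
    have hθη : C₂ * |θ - θ₀| ≤ η := by
      have h1 := hθmem.trans (min_le_right _ _)
      rw [le_div_iff₀ hC₂0] at h1
      linarith
    set z : ℝ → ℝ := fun r => x θ r - x θ₀ r - (θ - θ₀) * y r with hzdef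
    set εf : ℝ := ε' * (C₂ * |θ - θ₀|) with hεfdef
    have hεf0 : 0 ≤ εf := by positivity
    have hz : ∀ r ∈ Icc (0:ℝ) s₁, dist (z r) ((fun _ => (0:ℝ)) r) ≤
        gronwallBound 0 Cf.toNNReal (εf + 0) (r - 0) := by
      apply dist_le_of_approx_trajectories_ODE (v := fun r u => a r * u)
        (f' := fun r => f (x θ r) c θ - f (x θ₀ r) c θ₀ - (θ - θ₀) * (a r * y r + b r))
        (g' := fun _ => (0:ℝ))
      · intro r
        rw [lipschitzWith_iff_dist_le_mul]
        intro u u'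
        rw [Real.dist_eq, Real.dist_eq, Real.coe_toNNReal _ hCf0, ← mul_sub, abs_mul]
        exact mul_le_mul_of_nonneg_right (haB r) (abs_nonneg _)
      · intro r hr
        have hr' : r ∈ Icc (0:ℝ) T := ⟨hr.1, hr.2.trans hs₁.2⟩
        exact (((hxca θ r hr').sub (hxca θ₀ r hr')).sub
          ((hycont.continuousAt).const_smul (θ - θ₀) :)).continuousWithinAt
      · intro r hr
        have hr' : r ∈ Icc (0:ℝ) T := ⟨hr.1, hr.2.le.trans hs₁.2⟩
        exact (((hx θ r hr').sub (hx θ₀ r hr')).sub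
          ((hy r).const_mul (θ - θ₀))).hasDerivWithinAt
      · -- the error bound
        intro r hr
        have hr' : r ∈ Icc (0:ℝ) T := ⟨hr.1, hr.2.le.trans hs₁.2⟩
        set q₀ : ℝ × ℝ := (x θ₀ r, θ₀) with hq₀def
        set qθ : ℝ × ℝ := (x θ r, θ) with hqθdef
        set Dl := fderiv ℝ G q₀ with hDldef
        have hq₀K : q₀ ∈ K₁ := htrajK r hr' θ₀ (by simp)
        have hdev : |x θ r - x θ₀ r| ≤ C₁ * |θ - θ₀| := StepA θ hθδ₁ r hr'
        have hdev1 : |x θ r - x θ₀ r| ≤ 1 := by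
          refine hdev.trans ?_
          calc C₁ * |θ - θ₀| ≤ C₁ * δ₁ := mul_le_mul_of_nonneg_left hθδ₁ hC₁0
            _ ≤ 1 / 2 := hC₁δ₁
            _ ≤ 1 := by norm_num
        have hqθK : qθ ∈ K₁ := by
          have h3 := hC r hr'
          rw [Real.norm_eq_abs, abs_le] at h3
          rw [abs_le] at hdev1 hθ1
          exact ⟨⟨by linarith, by linarith⟩, ⟨by linarith, by linarith⟩⟩
        have hΔnorm : ‖qθ - q₀‖ ≤ C₂ * |θ - θ₀| := by
          rw [hqθdef, hq₀def, Prod.mk_sub_mk, Prod.norm_def]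
          simp only [Real.norm_eq_abs]
          apply max_le
          · exact hdev.trans (mul_le_mul_of_nonneg_right hC₁C₂ (abs_nonneg _))
          · nlinarith [abs_nonneg (θ - θ₀)]
        have htay : ‖G qθ - G q₀ - Dl (qθ - q₀)‖ ≤ ε' * ‖qθ - q₀‖ := by
          have hmain := (convex_segment q₀ qθ).norm_image_sub_le_of_norm_hasFDerivWithin_le
            (f := fun q => G q - Dl q) (f' := fun q => fderiv ℝ G q - Dl) (C := ε')
            (fun w hw => ((hGdiff w).hasFDerivAt.sub Dl.hasFDerivAt).hasFDerivWithinAt)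
            (fun w hw => ?_) (left_mem_segment ℝ q₀ qθ) (right_mem_segment ℝ q₀ qθ)
          · calc ‖G qθ - G q₀ - Dl (qθ - q₀)‖
                = ‖(G qθ - Dl qθ) - (G q₀ - Dl q₀)‖ := by rw [map_sub]; ring_nf
              _ ≤ ε' * ‖qθ - q₀‖ := hmain
          · -- bound on the derivative of the remainder on the segment
            have hwK : w ∈ K₁ := hK₁cvx.segment_subset hq₀K hqθK hw
            obtain ⟨ta, tb, hta, htb, htab, hwsum⟩ := hw
            have hw' : w - q₀ = tb • (qθ - q₀) := by
              rw [← hwsum, smul_sub]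
              have : ta = 1 - tb := by linarith
              rw [this, sub_smul, one_smul]
              abel
            have hwdist : dist w q₀ ≤ η := by
              rw [dist_eq_norm, hw', norm_smul, Real.norm_eq_abs, abs_of_nonneg htb]
              calc tb * ‖qθ - q₀‖ ≤ 1 * ‖qθ - q₀‖ :=
                  mul_le_mul_of_nonneg_right (by linarith) (norm_nonneg _)
                _ = ‖qθ - q₀‖ := one_mul _
                _ ≤ C₂ * |θ - θ₀| := hΔnorm
                _ ≤ η := hθη
            have h5 := hη w hwK q₀ hq₀K hwdist
            rw [dist_eq_norm] at h5
            exact h5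
        have hDl : Dl (qθ - q₀) = a r * (x θ r - x θ₀ r) + b r * (θ - θ₀) := by
          have hsplit : qθ - q₀ = (x θ r - x θ₀ r) • ((1:ℝ), (0:ℝ)) + (θ - θ₀) • ((0:ℝ), (1:ℝ)) := by
            rw [hqθdef, hq₀def, Prod.mk_sub_mk]
            simp [Prod.ext_iff]
          rw [hsplit, map_add, Dl.map_smul, Dl.map_smul, smul_eq_mul, smul_eq_mul]
          have hring : ∀ A B : ℝ, (x θ r - x θ₀ r) * A + (θ - θ₀) * B
              = A * (x θ r - x θ₀ r) + B * (θ - θ₀) := fun A B => by ring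
          have ha' : a r = Dl ((1:ℝ), (0:ℝ)) := by
            rw [hDldef, hq₀def, hadef]
            show fderiv ℝ G (χ r, θ₀) (1, 0) = fderiv ℝ G (x θ₀ r, θ₀) (1, 0)
            rw [hχid r hr']
          have hb' : b r = Dl ((0:ℝ), (1:ℝ)) := by
            rw [hDldef, hq₀def, hbdef]
            show fderiv ℝ G (χ r, θ₀) (0, 1) = fderiv ℝ G (x θ₀ r, θ₀) (0, 1)
            rw [hχid r hr']
          rw [← ha', ← hb', hring]
        have hkey : (f (x θ r) c θ - f (x θ₀ r) c θ₀ - (θ - θ₀) * (a r * y r + b r))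
            - a r * z r = G qθ - G q₀ - Dl (qθ - q₀) := by
          rw [hDl, hzdef]
          show _ = f (x θ r) c θ - f (x θ₀ r) c θ₀ - _
          ring
        rw [Real.dist_eq]
        calc |(f (x θ r) c θ - f (x θ₀ r) c θ₀ - (θ - θ₀) * (a r * y r + b r)) - a r * z r|
            = ‖G qθ - G q₀ - Dl (qθ - q₀)‖ := by rw [hkey]; rfl
          _ ≤ ε' * ‖qθ - q₀‖ := htay
          _ ≤ ε' * (C₂ * |θ - θ₀|) := mul_le_mul_of_nonneg_left hΔnorm hε'.le
          _ = εf := rfl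
      · exact continuousOn_const
      · exact fun r hr => (hasDerivWithinAt_const r _ 0)
      · intro r hr
        simp
      · rw [hzdef]
        simp only []
        rw [hx0 θ, hx0 θ₀, hy0]
        simp
    have hfinal := hz s₁ ⟨hs₁.1, le_rfl⟩
    rw [Real.dist_eq, Real.coe_toNNReal _ hCf0] at hfinal
    have hgb := gb_le (K := Cf) (ε := εf + 0) (x := s₁ - 0) (X := T)
      hCf0 (by positivity) (by linarith [hs₁.1]) (by linarith [hs₁.2])
    have hchain : |z s₁ - 0| ≤ (εf + 0) * T * Real.exp (Cf * T) := hfinal.trans hgb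
    rw [sub_zero] at hchain
    have hεcD : εf * T * Real.exp (Cf * T) ≤ εc * |θ - θ₀| := by
      rw [hεfdef, hε'def]
      have hrw : εc / D * (C₂ * |θ - θ₀|) * T * Real.exp (Cf * T)
          = εc * |θ - θ₀| * ((C₂ * T * Real.exp (Cf * T)) / D) := by
        field_simp
      rw [hrw]
      have hle1 : (C₂ * T * Real.exp (Cf * T)) / D ≤ 1 := by
        rw [div_le_one hD, hDdef]
        linarith
      have h0 : 0 ≤ εc * |θ - θ₀| := by positivity
      nlinarith
    have : |z s₁| ≤ εc * |θ - θ₀| := by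
      rw [add_zero] at hchain
      exact hchain.trans hεcD
    have hnorm : ‖x θ s₁ - x θ₀ s₁ - (θ - θ₀) • y s₁‖ = |z s₁| := by
      rw [smul_eq_mul, Real.norm_eq_abs]
    rw [hnorm, Real.norm_eq_abs]
    exact this
  -- ### Step D: derivative of the loss
  have hLD : HasDerivAt (fun θ => ∑ j, (X j - x θ (t j)) ^ 2)
      (∑ j, 2 * (x θ₀ (t j) - X j) * y (t j)) θ₀ := by
    apply HasDerivAt.fun_sum
    intro j _
    have h1 : HasDerivAt (fun θ => x θ (t j)) (y (t j)) θ₀ :=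
      StepC (t j) ⟨(htmem j).1.le, (htmem j).2⟩
    have h2 := (h1.const_sub (X j)).fun_pow 2
    refine h2.congr_deriv ?_
    symm
    simp only [Nat.cast_ofNat, pow_one]
    ring
  -- ### Step E: value of the adjoint integral
  have pT0 : p T = 0 := by
    have h1 : Tendsto p (nhdsWithin T (Ioi T)) (nhds (p T)) :=
      (hpright T ⟨hT.le, le_rfl⟩).tendsto.mono_left (nhdsWithin_mono T Ioi_subset_Ici_self)
    have h2 : Tendsto p (nhdsWithin T (Ioi T)) (nhds 0) := by
      apply Tendsto.congr' _ tendsto_const_nhds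
      exact eventually_nhdsWithin_of_forall (fun s hs => (hpafter s hs).symm)
    exact tendsto_nhds_unique h1 h2
  -- the partition points
  set e : ℕ → ℝ := fun n => if h : 0 < n ∧ n ≤ N then t ⟨n - 1, by omega⟩ else 0 with hedef
  have he0 : e 0 = 0 := by simp [hedef]
  have heS : ∀ n (h : n < N), e (n + 1) = t ⟨n, h⟩ := by
    intro n h
    rw [hedef]
    simp only []
    rw [dif_pos ⟨Nat.succ_pos n, h⟩]
    exact congrArg t (Fin.ext (by simp))
  -- the main induction
  have main : ∀ n : ℕ, n ≤ N →
      IntervalIntegrable (fun s => p s * b s) volume 0 (e n) ∧ e n ∈ Icc (0:ℝ) T ∧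
      ∫ s in (0:ℝ)..(e n), p s * b s =
        (∑ j : Fin N, if (j:ℕ) < n then 2 * (x θ₀ (t j) - X j) * y (t j) else 0)
          + p (e n) * y (e n) := by
    intro n
    induction n with
    | zero =>
      intro _
      rw [he0]
      refine ⟨IntervalIntegrable.refl, ⟨le_rfl, hT.le⟩, ?_⟩
      rw [integral_same]
      have hz0 : ∀ j : Fin N, (if (j:ℕ) < 0 then 2 * (x θ₀ (t j) - X j) * y (t j) else 0) = 0 :=
        fun j => by simp
      rw [Finset.sum_congr rfl (fun j _ => hz0 j), Finset.sum_const_zero, hy0]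
      ring
    | succ n IH =>
      intro hn1
      have hnN : n < N := hn1
      obtain ⟨IHint, IHmem, IHval⟩ := IH (by omega)
      have hvS : e (n + 1) = t ⟨n, hnN⟩ := heS n hnN
      have huv : e n < t ⟨n, hnN⟩ := by
        rcases Nat.eq_zero_or_pos n with hn0 | hn0
        · subst hn0
          rw [he0]
          exact (htmem _).1
        · obtain ⟨m, rfl⟩ : ∃ m, n = m + 1 := ⟨n - 1, by omega⟩
          rw [heS m (by omega)]
          exact ht (by rw [Fin.mk_lt_mk]; omega)
      have htjle : ∀ j : Fin N, (j:ℕ) < n → t j ≤ e n := by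
        intro j hj
        have hn0 : 0 < n := by omega
        obtain ⟨m, rfl⟩ : ∃ m, n = m + 1 := ⟨n - 1, by omega⟩
        rw [heS m (by omega)]
        exact ht.monotone (by rw [Fin.mk_le_mk]; omega)
      have hnoin : ∀ j : Fin N, t j ∉ Ioo (e n) (t ⟨n, hnN⟩) := by
        intro j hj
        have hjn : (j:ℕ) < n := by
          have h2 := (ht.lt_iff_lt).1 hj.2
          rw [Fin.lt_def] at h2
          exact h2
        exact absurd (htjle j hjn) (not_le.2 hj.1)
      have hpu' : ContinuousWithinAt p (Ici (e n)) (e n) := hpright (e n) IHmem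
      have hvT : t ⟨n, hnN⟩ ∈ Ioc (0:ℝ) T := htmem _
      have hpd' : ∀ s ∈ Ioo (e n) (t ⟨n, hnN⟩), HasDerivAt p (-(a s) * p s) s := by
        intro s hs
        refine hp' s ⟨lt_of_le_of_lt IHmem.1 hs.1, lt_of_lt_of_le hs.2 hvT.2⟩ ?_
        intro j hjeq
        exact hnoin j (hjeq ▸ hs)
      have piece := piece_integral a b y p hbc hycont hy (e n) (t ⟨n, hnN⟩)
        (p (t ⟨n, hnN⟩) + 2 * (x θ₀ (t ⟨n, hnN⟩) - X ⟨n, hnN⟩)) huv hpu' hpd'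
        (hpjump ⟨n, hnN⟩)
      rw [hvS]
      refine ⟨IHint.trans piece.1, ⟨hvT.1.le, hvT.2⟩, ?_⟩
      rw [← integral_add_adjacent_intervals IHint piece.1, IHval, piece.2]
      have hsum : (∑ j : Fin N, if (j:ℕ) < n + 1 then 2 * (x θ₀ (t j) - X j) * y (t j) else 0)
          = (∑ j : Fin N, if (j:ℕ) < n then 2 * (x θ₀ (t j) - X j) * y (t j) else 0)
            + 2 * (x θ₀ (t ⟨n, hnN⟩) - X ⟨n, hnN⟩) * y (t ⟨n, hnN⟩) := by
        have hpt : ∀ j : Fin N, (if (j:ℕ) < n + 1 then 2 * (x θ₀ (t j) - X j) * y (t j) else 0)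
            = (if (j:ℕ) < n then 2 * (x θ₀ (t j) - X j) * y (t j) else 0)
              + (if j = ⟨n, hnN⟩ then 2 * (x θ₀ (t j) - X j) * y (t j) else 0) := by
          intro j
          have hiff : (j = (⟨n, hnN⟩ : Fin N)) ↔ (j : ℕ) = n := by
            rw [Fin.ext_iff]
          by_cases h1 : (j:ℕ) < n
          · rw [if_pos (by omega), if_pos h1, if_neg (by rw [hiff]; omega)]
            ring
          · by_cases h2 : (j:ℕ) = n
            · rw [if_pos (by omega), if_neg h1, if_pos (hiff.2 h2)]
              ring
            · rw [if_neg (by omega), if_neg h1, if_neg (by rw [hiff]; omega)]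
              ring
        rw [Finset.sum_congr rfl (fun j _ => hpt j), Finset.sum_add_distrib,
          Finset.sum_ite_eq' Finset.univ (⟨n, hnN⟩ : Fin N)
            (fun j => 2 * (x θ₀ (t j) - X j) * y (t j)), if_pos (Finset.mem_univ _)]
      rw [hsum]
      ring
  obtain ⟨hintN, hmemN, hvalN⟩ := main N le_rfl
  have hsumN : (∑ j : Fin N, if (j:ℕ) < N then 2 * (x θ₀ (t j) - X j) * y (t j) else 0)
      = ∑ j : Fin N, 2 * (x θ₀ (t j) - X j) * y (t j) :=
    Finset.sum_congr rfl (fun j _ => if_pos j.isLt)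
  have htjleN : ∀ j : Fin N, t j ≤ e N := by
    intro j
    have hN0 : 0 < N := j.pos
    obtain ⟨m, hm⟩ : ∃ m, N = m + 1 := ⟨N - 1, by omega⟩
    rw [hm, heS m (by omega)]
    exact ht.monotone (by rw [Fin.le_def]; simp only []; omega)
  have hIntegral : ∫ s in (0:ℝ)..T, p s * b s
      = ∑ j : Fin N, 2 * (x θ₀ (t j) - X j) * y (t j) := by
    rcases eq_or_lt_of_le hmemN.2 with heT | heT
    · rw [← heT, hvalN, hsumN, heT, pT0]
      ring
    · have hTne : ∀ j : Fin N, (T:ℝ) ≠ t j := fun j =>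
        ne_of_gt (lt_of_le_of_lt (htjleN j) heT)
      have hpd' : ∀ s ∈ Ioo (e N) T, HasDerivAt p (-(a s) * p s) s := by
        intro s hs
        refine hp' s ⟨lt_of_le_of_lt hmemN.1 hs.1, hs.2⟩ ?_
        intro j hjeq
        exact absurd (htjleN j) (not_le.2 (hjeq ▸ hs.1))
      have hlast := piece_integral a b y p hbc hycont hy (e N) T (p T) heT
        (hpright (e N) hmemN) hpd' (hpleft T ⟨hT, le_rfl⟩ hTne)
      rw [← integral_add_adjacent_intervals hintN hlast.1, hvalN, hsumN, hlast.2, pT0]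
      ring
  -- ### conclusion
  have hfinal : (∫ s in (0:ℝ)..T, p s * deriv (fun u => f (x θ₀ s) c u) θ₀)
      = ∑ j : Fin N, 2 * (x θ₀ (t j) - X j) * y (t j) := by
    rw [← hIntegral]
    apply integral_congr
    intro s hs
    rw [uIcc_of_le hT.le] at hs
    show p s * deriv (fun u => f (x θ₀ s) c u) θ₀ = p s * b s
    rw [hbeq s hs]
  rw [hfinal]
  exact hLD
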